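/- arXiv:2512.14390 — 6 statements merged into one kernel-verified Lean document; each statement's English description precedes it below -/
import Mathlib

section
/- If h : V(G) → V(H) is a surjective two-way homomorphism and ψ is a k-b-coloring of G such that ker(h) ⊆ ker(ψ) (i.e., h(u) = h(v) implies ψ(u) = ψ(v)), then there is a k-b-coloring χ of H such that ψ = χ ∘ h. -/
/-- The closed neighborhood of a vertex. -/
def closedNbhd {V : Type*} (G : SimpleGraph V) (v : V) : Set V :=
  insert v (G.neighborSet v)

/-- `u` is a b-vertex in the coloring `ψ` with colors `[k] = {1,…,k}`:
its closed neighborhood contains all `k` colors. -/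
def IsBVertex {V : Type*} (G : SimpleGraph V) (k : ℕ) (ψ : V → ℕ) (u : V) : Prop :=
  ∀ c ∈ Finset.Icc 1 k, ∃ w ∈ closedNbhd G u, ψ w = c

/-- `ψ` is a proper `k`-coloring such that every color class contains a b-vertex. -/
def IsBColoring {V : Type*} (G : SimpleGraph V) (k : ℕ) (ψ : V → ℕ) : Prop :=
  (∀ v, ψ v ∈ Finset.Icc 1 k) ∧
  (∀ u v, G.Adj u v → ψ u ≠ ψ v) ∧
  ∀ c ∈ Finset.Icc 1 k, ∃ u, ψ u = c ∧ IsBVertex G k ψ u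

theorem stmt1 {V W : Type*} (G : SimpleGraph V) (H : SimpleGraph W)
    (h : V → W) (hsurj : Function.Surjective h)
    (htwoway : ∀ u v : V, G.Adj u v ↔ H.Adj (h u) (h v))
    (k : ℕ) (ψ : V → ℕ) (hψ : IsBColoring G k ψ)
    (hker : ∀ u v : V, h u = h v → ψ u = ψ v) :
    ∃ χ : W → ℕ, IsBColoring H k χ ∧ ψ = χ ∘ h := by
  classical
  obtain ⟨hψ1, hψ2, hψ3⟩ := hψ
  set g := Function.surjInv hsurj with hg
  have hgh : ∀ w, h (g w) = w := Function.surjInv_eq hsurj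
  set χ : W → ℕ := fun w => ψ (g w) with hχ
  have hcomp : ∀ v, χ (h v) = ψ v := fun v => hker _ _ (hgh (h v))
  refine ⟨χ, ⟨fun w => hψ1 _, ?_, ?_⟩, funext fun v => (hcomp v).symm⟩
  · intro u v hadj
    have : G.Adj (g u) (g v) := by
      rw [htwoway, hgh, hgh]; exact hadj
    exact hψ2 _ _ this
  · intro c hc
    obtain ⟨u, hu, hbu⟩ := hψ3 c hc
    refine ⟨h u, by rw [hcomp]; exact hu, ?_⟩
    intro c' hc'
    obtain ⟨w, hw, hwc⟩ := hbu c' hc'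
    refine ⟨h w, ?_, by rw [hcomp]; exact hwc⟩
    rcases hw with hw | hw
    · exact Or.inl (by rw [hw])
    · exact Or.inr ((htwoway u w).mp hw)
end

section
/- Let G be a connected graph with feedback edge number p containing no dangling trees (no induced subtree that becomes a connected component after removing at most one edge). Then there exists a set S ⊆ V(G) with |S| ≤ 4p such that the set 𝒫 of connected components of G − S satisfies |𝒫| ≤ 4p and every P ∈ 𝒫 is a path all of whose vertices have degree exactly 2 in G. -/
set_option maxHeartbeats 1000000

/-- The graph `G - S`: the subgraph of `G` on the vertices outside `S`
(vertices of `S` become isolated). -/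
def restrictOut {V : Type*} (G : SimpleGraph V) (S : Set V) : SimpleGraph V where
  Adj u v := G.Adj u v ∧ u ∉ S ∧ v ∉ S
  symm := by
    constructor
    intro u v h
    exact ⟨h.1.symm, h.2.2, h.2.1⟩
  loopless := by
    constructor
    intro u h
    exact (G.ne_of_adj h.1) rfl

/-- `p` is the feedback edge number of `G`: the least size of a set of edges
whose removal makes `G` acyclic. -/
def FeedbackEdgeNumber {V : Type*} (G : SimpleGraph V) (p : ℕ) : Prop :=
  IsLeast {n : ℕ | ∃ F : Set (Sym2 V), F.Finite ∧ F.ncard = n ∧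
    (G.deleteEdges F).IsAcyclic} p

/-- `G` contains a dangling tree: a nonempty vertex set inducing a tree that becomes
a connected component after removing at most one edge from `G`. -/
def HasDanglingTree {V : Type*} (G : SimpleGraph V) : Prop :=
  ∃ A : Set V, A.Nonempty ∧ (G.induce A).Connected ∧ (G.induce A).IsAcyclic ∧
    ∃ F : Set (Sym2 V), F.ncard ≤ 1 ∧
      ∃ v ∈ A, A = {w | (G.deleteEdges F).Reachable v w}

open SimpleGraph Finset

section Aux

variable {V : Type*}

/-- A walk in `G` whose endpoints are not reachable in `G.deleteEdges F`
witnesses a crossing edge. -/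
lemma exists_crossing_edge {G : SimpleGraph V} {F : Set (Sym2 V)} :
    ∀ {a b : V} (_ : G.Walk a b), ¬ (G.deleteEdges F).Reachable a b →
    ∃ x y : V, s(x, y) ∈ F ∧ G.Adj x y ∧ ¬ (G.deleteEdges F).Reachable x y := by
  intro a b w
  induction w with
  | nil => intro h; exact absurd (Reachable.refl _) h
  | cons h q ih =>
    rename_i u x b'
    intro hnr
    by_cases hr : (G.deleteEdges F).Reachable u x
    · exact ih (fun hxb => hnr (hr.trans hxb))
    · refine ⟨u, x, ?_, h, hr⟩
      by_contra hne
      exact hr (SimpleGraph.Adj.reachable (by simp [deleteEdges_adj, h, hne]))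

lemma deleteEdges_inter_edgeSet (G : SimpleGraph V) (F : Set (Sym2 V)) :
    G.deleteEdges (F ∩ G.edgeSet) = G.deleteEdges F := by
  ext a b
  simp only [deleteEdges_adj, Set.mem_inter_iff, mem_edgeSet]
  tauto

/-- From the feedback edge number we can get a minimum feedback edge set consisting of
actual edges such that removing it leaves a *connected* acyclic graph (a spanning tree). -/
lemma exists_good_feedback {G : SimpleGraph V} {p : ℕ} (hconn : G.Connected)
    (hfen : FeedbackEdgeNumber G p) :
    ∃ F : Set (Sym2 V), F ⊆ G.edgeSet ∧ F.Finite ∧ F.ncard = p ∧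
      (G.deleteEdges F).IsAcyclic ∧ (G.deleteEdges F).Connected := by
  obtain ⟨F, hFfin, hFcard, hFac⟩ := hfen.1
  refine ⟨F ∩ G.edgeSet, Set.inter_subset_right, hFfin.inter_of_left _, ?_, ?_, ?_⟩
  · refine le_antisymm ?_ ?_
    · rw [← hFcard]
      exact Set.ncard_le_ncard Set.inter_subset_left hFfin
    · exact hfen.2 ⟨F ∩ G.edgeSet, hFfin.inter_of_left _, rfl, by
        rwa [deleteEdges_inter_edgeSet]⟩
  · rwa [deleteEdges_inter_edgeSet]
  · -- connectivity of the spanning forest; otherwise we could drop a crossing edge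
    set F₀ := F ∩ G.edgeSet with hF₀
    have hF₀fin : F₀.Finite := hFfin.inter_of_left _
    have hF₀ac : (G.deleteEdges F₀).IsAcyclic := by rwa [deleteEdges_inter_edgeSet]
    have hF₀card : F₀.ncard = p := le_antisymm
      (hFcard ▸ Set.ncard_le_ncard Set.inter_subset_left hFfin)
      (hfen.2 ⟨F₀, hF₀fin, rfl, hF₀ac⟩)
    rw [connected_iff]
    refine ⟨?_, hconn.nonempty⟩
    intro a b
    by_contra hnr
    obtain ⟨x, y, hxyF, hxyadj, hxynr⟩ := exists_crossing_edge ((hconn a b).some) hnr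
    -- removing the edge s(x,y) from F₀ still gives an acyclic graph
    have hkey : (G.deleteEdges (F₀ \ {s(x, y)})).IsAcyclic := by
      intro u c hc
      by_cases he : s(x, y) ∈ c.edges
      · have hadj : (G.deleteEdges (F₀ \ {s(x, y)})).Adj x y ∧
            ((G.deleteEdges (F₀ \ {s(x, y)})) \ fromEdgeSet {s(x, y)}).Reachable x y :=
          (adj_and_reachable_delete_edges_iff_exists_cycle).2 ⟨u, c, hc, he⟩
        have hgraph : (G.deleteEdges (F₀ \ {s(x, y)})) \ fromEdgeSet {s(x, y)} =
            G.deleteEdges F₀ := by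
          ext a' b'
          simp only [sdiff_adj, deleteEdges_adj, Set.mem_diff, Set.mem_singleton_iff,
            fromEdgeSet_adj]
          constructor
          · rintro ⟨⟨h1, h2⟩, h3⟩
            refine ⟨h1, fun hmem => ?_⟩
            by_cases hex : s(a', b') = s(x, y)
            · exact h3 ⟨hex, h1.ne⟩
            · exact h2 ⟨hmem, hex⟩
          · rintro ⟨h1, h2⟩
            refine ⟨⟨h1, fun hmem => h2 hmem.1⟩, fun hmem => h2 (hmem.1 ▸ hxyF)⟩
        rw [hgraph] at hadj
        exact hxynr hadj.2
      · have hsub : ∀ e ∈ c.edges, e ∈ (G.deleteEdges F₀).edgeSet := by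
          intro e hec
          have hthis := c.edges_subset_edgeSet hec
          rw [edgeSet_deleteEdges] at hthis ⊢
          refine ⟨hthis.1, fun hmem => ?_⟩
          have : e ∈ ({s(x, y)} : Set (Sym2 V)) := by
            by_contra hne
            exact hthis.2 ⟨hmem, hne⟩
          exact he (this ▸ hec)
        exact hF₀ac (c.transfer _ hsub) (hc.transfer hsub)
    have hlt : (F₀ \ {s(x, y)}).ncard < p := by
      rw [← hF₀card]
      exact Set.ncard_diff_singleton_lt_of_mem hxyF hF₀fin
    exact absurd (hfen.2 ⟨F₀ \ {s(x, y)}, hF₀fin.diff, rfl, hkey⟩) (by omega)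

lemma singleton_induce_connected (G : SimpleGraph V) (v : V) :
    (G.induce ({v} : Set V)).Connected := by
  rw [connected_iff]
  refine ⟨fun a b => ?_, ⟨⟨v, rfl⟩⟩⟩
  have : a = b := Subtype.ext (a.2.trans b.2.symm)
  exact this ▸ Reachable.refl _

lemma singleton_induce_acyclic (G : SimpleGraph V) (v : V) :
    (G.induce ({v} : Set V)).IsAcyclic := by
  intro u c hc
  cases c with
  | nil => exact hc.ne_nil rfl
  | cons h q =>
    rename_i x
    have hux : u = x := Subtype.ext (u.2.trans x.2.symm)
    subst hux
    exact (G.induce _).loopless.irrefl _ h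

lemma two_le_degree_of_no_dangling {G : SimpleGraph V} [Fintype V] [DecidableRel G.Adj]
    (hdt : ¬HasDanglingTree G) (v : V) : 2 ≤ G.degree v := by
  by_contra hlt
  push_neg at hlt
  interval_cases h : G.degree v
  · refine hdt ⟨{v}, ⟨v, rfl⟩, singleton_induce_connected G v, singleton_induce_acyclic G v,
      ∅, by simp, v, rfl, ?_⟩
    ext w
    simp only [Set.mem_singleton_iff, Set.mem_setOf_eq, deleteEdges_empty]
    constructor
    · rintro rfl; exact Reachable.refl _
    · rintro ⟨p⟩
      cases p with
      | nil => rfl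
      | cons hadj q =>
        exfalso
        rename_i x
        have : x ∈ G.neighborFinset v := by simpa using hadj
        simp [Finset.card_eq_zero.1 h] at this
  · obtain ⟨u, hu⟩ := Finset.card_eq_one.1 h
    refine hdt ⟨{v}, ⟨v, rfl⟩, singleton_induce_connected G v, singleton_induce_acyclic G v,
      {s(v, u)}, by simp, v, rfl, ?_⟩
    ext w
    simp only [Set.mem_singleton_iff, Set.mem_setOf_eq]
    constructor
    · rintro rfl; exact Reachable.refl _
    · rintro ⟨p⟩
      cases p with
      | nil => rfl
      | cons hadj q =>
        exfalso
        rename_i x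
        rw [deleteEdges_adj] at hadj
        have hx : x ∈ G.neighborFinset v := by simpa using hadj.1
        rw [hu, Finset.mem_singleton] at hx
        subst hx
        simp at hadj

lemma restrictOut_reachable_not_mem {G : SimpleGraph V} {S : Set V} :
    ∀ {a b : V}, (restrictOut G S).Reachable a b → a ∉ S → b ∉ S := by
  intro a b ⟨p⟩
  induction p with
  | nil => exact id
  | cons h q ih => exact fun _ => ih h.2.2

/-- Walks in `restrictOut G S` transfer to reachability in the induced graph on any
adjacency-closed set `P`. -/
lemma restrictOut_walk_induce_reachable {G : SimpleGraph V} {S : Set V} {P : Set V}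
    (hcl : ∀ {a b : V}, a ∈ P → (restrictOut G S).Adj a b → b ∈ P) :
    ∀ {a b : V} (_ : (restrictOut G S).Walk a b) (ha : a ∈ P),
      ∃ hb : b ∈ P, (G.induce P).Reachable ⟨a, ha⟩ ⟨b, hb⟩ := by
  intro a b p
  induction p with
  | nil => exact fun ha => ⟨ha, Reachable.refl _⟩
  | cons h q ih =>
    intro ha
    rename_i u x b'
    have hx : x ∈ P := hcl ha h
    obtain ⟨hb, hr⟩ := ih hx
    refine ⟨hb, Reachable.trans (Adj.reachable ?_) hr⟩
    exact h.1

open scoped Classical in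
lemma sym2_filter_card [Fintype V] (e : Sym2 V) :
    (Finset.univ.filter (· ∈ e)).card ≤ 2 := by
  induction e using Sym2.ind with
  | _ a b =>
    calc (Finset.univ.filter (· ∈ s(a, b))).card ≤ ({a, b} : Finset V).card := by
          apply Finset.card_le_card
          intro x hx
          rw [Finset.mem_filter, Sym2.mem_iff] at hx
          simpa using hx.2
    _ ≤ 2 := Finset.card_insert_le _ _ |>.trans (by simp)

open scoped Classical in
lemma induce_degree_eq {G : SimpleGraph V} [Fintype V] (P : Set V) (x : ↥P) :
    (G.induce P).degree x = ((G.neighborFinset x.val).filter (· ∈ P)).card := by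
  rw [degree]
  apply Finset.card_bij (fun y _ => y.val)
  · intro y hy
    rw [mem_neighborFinset] at hy
    simp only [comap_adj, Function.Embedding.coe_subtype] at hy
    exact mem_filter.2 ⟨(mem_neighborFinset _ _ _).2 hy, y.2⟩
  · intro y _ y' _ h
    exact Subtype.ext h
  · intro w hw
    rw [mem_filter, mem_neighborFinset] at hw
    exact ⟨⟨w, hw.2⟩, (mem_neighborFinset _ _ _).2 (by simpa using hw.1), rfl⟩

open scoped Classical in
/-- Every connected component `P` of `G - S` which induces a tree of degree-2 vertices
sends at least two edges into `S`. -/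
lemma two_le_darts [Fintype V] {G : SimpleGraph V} {S P : Set V}
    (hPS : ∀ w ∈ P, w ∉ S)
    (hcl : ∀ a ∈ P, ∀ b, G.Adj a b → b ∉ S → b ∈ P)
    (hdeg : ∀ w ∈ P, G.degree w = 2)
    (htree : (G.induce P).IsTree) :
    2 ≤ {d : V × V | (G.Adj d.1 d.2 ∧ d.1 ∉ S ∧ d.2 ∈ S) ∧ d.1 ∈ P}.ncard := by
  classical
  have hset : {d : V × V | (G.Adj d.1 d.2 ∧ d.1 ∉ S ∧ d.2 ∈ S) ∧ d.1 ∈ P} =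
      ↑((Finset.univ.filter (fun d : V × V => G.Adj d.1 d.2 ∧ d.1 ∉ S ∧ d.2 ∈ S)).filter
        (fun d => d.1 ∈ P)) := by
    ext d
    simp [Finset.mem_filter, and_assoc]
  rw [hset, Set.ncard_coe_finset]
  set Pf : Finset V := P.toFinset with hPf
  set DP := ((Finset.univ.filter (fun d : V × V => G.Adj d.1 d.2 ∧ d.1 ∉ S ∧ d.2 ∈ S)).filter
        (fun d => d.1 ∈ P)) with hDP
  have hPfcard : (G.induce P).edgeFinset.card + 1 = Pf.card := by
    rw [htree.card_edgeFinset, hPf, Set.toFinset_card]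
  have hPfpos : 1 ≤ Pf.card := by
    obtain ⟨x⟩ := htree.isConnected.nonempty
    exact Finset.card_pos.2 ⟨x.val, by simp [hPf, x.2]⟩
  have hsum1 : DP.card = ∑ u ∈ Pf, ((G.neighborFinset u).filter (· ∈ S)).card := by
    rw [Finset.card_eq_sum_card_fiberwise (f := Prod.fst) (t := Pf)
      (fun d hd => by simp only [hDP, Finset.mem_coe, mem_filter] at hd; simp [hPf, hd.2])]
    refine Finset.sum_congr rfl fun u hu => ?_
    apply Finset.card_bij (fun d _ => d.2)
    · intro d hd
      simp only [mem_filter, hDP, mem_univ, true_and] at hd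
      obtain ⟨⟨⟨hadj, _, hS⟩, _⟩, hfst⟩ := hd
      exact mem_filter.2 ⟨(mem_neighborFinset _ _ _).2 (hfst ▸ hadj), hS⟩
    · intro d hd d' hd' h
      simp only [mem_filter, hDP] at hd hd'
      exact Prod.ext (hd.2.trans hd'.2.symm) h
    · intro w hw
      rw [mem_filter, mem_neighborFinset] at hw
      have huP : u ∈ P := by simpa [hPf] using hu
      exact ⟨(u, w), mem_filter.2 ⟨mem_filter.2 ⟨mem_filter.2 ⟨mem_univ _,
        ⟨hw.1, hPS u huP, hw.2⟩⟩, huP⟩, rfl⟩, rfl⟩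
  have hsum2 : ∀ u ∈ Pf, ((G.neighborFinset u).filter (· ∈ S)).card
      + ((G.neighborFinset u).filter (· ∈ P)).card = 2 := by
    intro u hu
    have huP : u ∈ P := by simpa [hPf] using hu
    have : ((G.neighborFinset u).filter (· ∈ P)) = ((G.neighborFinset u).filter (¬ · ∈ S)) := by
      ext w
      simp only [mem_filter, mem_neighborFinset]
      constructor
      · rintro ⟨ha, hP⟩; exact ⟨ha, hPS w hP⟩
      · rintro ⟨ha, hS⟩; exact ⟨ha, hcl u huP w ha hS⟩
    rw [this, Finset.card_filter_add_card_filter_not, card_neighborFinset_eq_degree,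
      hdeg u huP]
  have hsum3 : ∑ u ∈ Pf, ((G.neighborFinset u).filter (· ∈ P)).card
      = 2 * (G.induce P).edgeFinset.card := by
    rw [← SimpleGraph.sum_degrees_eq_twice_card_edges]
    rw [Finset.sum_subtype (p := (· ∈ P)) Pf (fun x => by simp [hPf])
      (fun u => ((G.neighborFinset u).filter (· ∈ P)).card)]
    exact (Finset.sum_congr rfl fun x _ => (induce_degree_eq P x).symm)
  have htotal : ∑ u ∈ Pf, ((G.neighborFinset u).filter (· ∈ S)).card
      + ∑ u ∈ Pf, ((G.neighborFinset u).filter (· ∈ P)).card = 2 * Pf.card := by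
    rw [← Finset.sum_add_distrib]
    rw [Finset.sum_congr rfl hsum2, Finset.sum_const, smul_eq_mul, mul_comm]
  omega

end Aux

theorem stmt2 {V : Type*} [Fintype V] (G : SimpleGraph V) (p : ℕ)
    (hconn : G.Connected) (hfen : FeedbackEdgeNumber G p)
    (hdt : ¬HasDanglingTree G) :
    ∃ S : Set V, S.ncard ≤ 4 * p ∧
      {P : Set V | ∃ v ∉ S, P = {w | (restrictOut G S).Reachable v w}}.ncard ≤ 4 * p ∧
      ∀ P ∈ {P : Set V | ∃ v ∉ S, P = {w | (restrictOut G S).Reachable v w}},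
        (G.induce P).Connected ∧ (G.induce P).IsAcyclic ∧
        ∀ v ∈ P, (G.neighborSet v).ncard = 2 := by
  classical
  obtain ⟨F₀, hFE, hFfin, hFcard, hFac, hFconn⟩ := exists_good_feedback hconn hfen
  have hmin : ∀ v, 2 ≤ G.degree v := fun v => two_le_degree_of_no_dangling hdt v
  set n := Fintype.card V with hn
  set m := G.edgeFinset.card with hm
  -- edge count of G
  have htree : (G.deleteEdges F₀).IsTree := ⟨hFconn, hFac⟩
  have hHcard : (G.deleteEdges F₀).edgeFinset.card + 1 = n := htree.card_edgeFinset
  have hFt : hFfin.toFinset.card = p := by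
    rw [← Set.ncard_eq_toFinset_card _ hFfin, hFcard]
  have hmbound : m + 1 ≤ n + p := by
    have hsub : G.edgeFinset ⊆ (G.deleteEdges F₀).edgeFinset ∪ hFfin.toFinset := by
      intro e he
      rw [mem_edgeFinset] at he
      rw [Finset.mem_union, mem_edgeFinset, edgeSet_deleteEdges, Set.Finite.mem_toFinset]
      by_cases heF : e ∈ F₀
      · exact Or.inr heF
      · exact Or.inl ⟨he, heF⟩
    have h1 := Finset.card_le_card hsub
    have h2 := Finset.card_union_le (G.deleteEdges F₀).edgeFinset hFfin.toFinset
    omega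
  -- the set S
  set Sv : Set V := {v | G.degree v ≠ 2} ∪ {v | ∃ e ∈ F₀, v ∈ e} with hSv
  have hdegS : ∀ v, v ∉ Sv → G.degree v = 2 := by
    intro v hv
    by_contra h
    exact hv (Or.inl h)
  -- the high-degree vertices
  set V₃ : Finset V := Finset.univ.filter (fun v => 3 ≤ G.degree v) with hV₃
  set t := ∑ v ∈ V₃, G.degree v with ht
  have hdeg2 : ∀ v, v ∉ V₃ → G.degree v = 2 := by
    intro v hv
    have h1 := hmin v
    rw [hV₃, Finset.mem_filter] at hv
    simp only [Finset.mem_univ, true_and, not_le] at hv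
    omega
  have h3t : 3 * V₃.card ≤ t := by
    calc 3 * V₃.card = ∑ _v ∈ V₃, 3 := by rw [Finset.sum_const, smul_eq_mul, mul_comm]
    _ ≤ t := Finset.sum_le_sum (fun v hv => by
        rw [hV₃, Finset.mem_filter] at hv; exact hv.2)
  set c2 := (Finset.univ.filter (fun v => ¬ 3 ≤ G.degree v)).card with hc2
  have hcards : V₃.card + c2 = n := by
    rw [hV₃, hc2, Finset.card_filter_add_card_filter_not, Finset.card_univ]
  have hhs : t + 2 * c2 = 2 * m := by
    have hsplit := Finset.sum_filter_add_sum_filter_not Finset.univ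
      (fun v => 3 ≤ G.degree v) (fun v => G.degree v)
    have hrest : ∑ v ∈ Finset.univ.filter (fun v => ¬ 3 ≤ G.degree v), G.degree v
        = 2 * c2 := by
      rw [Finset.sum_congr rfl (fun v hv => hdeg2 v (by
        rw [Finset.mem_filter] at hv
        rw [hV₃, Finset.mem_filter]
        tauto))]
      rw [Finset.sum_const, smul_eq_mul, hc2, mul_comm]
    rw [← SimpleGraph.sum_degrees_eq_twice_card_edges, ← hsplit, hrest, ht, hV₃]
  -- the endpoints of the feedback edges
  set EP : Finset V := hFfin.toFinset.biUnion (fun e => Finset.univ.filter (· ∈ e)) with hEP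
  have hEPcard : EP.card ≤ 2 * p := by
    calc EP.card ≤ ∑ e ∈ hFfin.toFinset, (Finset.univ.filter (· ∈ e)).card :=
          Finset.card_biUnion_le
    _ ≤ ∑ _e ∈ hFfin.toFinset, 2 := Finset.sum_le_sum (fun e _ => sym2_filter_card e)
    _ = 2 * p := by rw [Finset.sum_const, smul_eq_mul, hFt, mul_comm]
  have hmemEP : ∀ v, (∃ e ∈ F₀, v ∈ e) → v ∈ EP := by
    rintro v ⟨e, he, hve⟩
    rw [hEP, Finset.mem_biUnion]
    exact ⟨e, hFfin.mem_toFinset.2 he, Finset.mem_filter.2 ⟨Finset.mem_univ _, hve⟩⟩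
  have hSvsub : Sv ⊆ ↑(V₃ ∪ EP) := by
    intro v hv
    rw [Finset.coe_union, Set.mem_union]
    rcases hv with h | h
    · left
      rw [Finset.mem_coe, hV₃, Finset.mem_filter]
      have := hmin v
      refine ⟨Finset.mem_univ _, ?_⟩
      simp only [Set.mem_setOf_eq] at h
      omega
    · exact Or.inr (hmemEP v h)
  have hSvcard : Sv.ncard ≤ V₃.card + 2 * p := by
    calc Sv.ncard ≤ (↑(V₃ ∪ EP) : Set V).ncard :=
          Set.ncard_le_ncard hSvsub (Set.toFinite _)
    _ = (V₃ ∪ EP).card := Set.ncard_coe_finset _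
    _ ≤ V₃.card + EP.card := Finset.card_union_le _ _
    _ ≤ V₃.card + 2 * p := by omega
  -- the darts into S
  set D : Finset (V × V) :=
    Finset.univ.filter (fun d : V × V => G.Adj d.1 d.2 ∧ d.1 ∉ Sv ∧ d.2 ∈ Sv) with hD
  have hSvfin : Sv.Finite := Set.toFinite _
  have hDcard : D.card ≤ t + 2 * p := by
    have h1 : D.card = ∑ w ∈ hSvfin.toFinset, (D.filter (fun d => d.2 = w)).card := by
      apply Finset.card_eq_sum_card_fiberwise
      intro d hd
      exact hSvfin.mem_toFinset.2 (Finset.mem_filter.1 hd).2.2.2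
    have h2 : ∀ w ∈ hSvfin.toFinset, (D.filter (fun d => d.2 = w)).card ≤
        ((G.neighborFinset w).filter (· ∉ Sv)).card := by
      intro w _
      apply Finset.card_le_card_of_injOn (fun d => d.1)
      · intro d hd
        obtain ⟨hdD, hsnd⟩ := Finset.mem_filter.1 hd
        obtain ⟨_, hadj, hd1, _⟩ := Finset.mem_filter.1 hdD
        exact Finset.mem_filter.2 ⟨(mem_neighborFinset _ _ _).2 (hsnd ▸ hadj).symm, hd1⟩
      · intro d hd d' hd' h
        rw [Finset.mem_coe] at hd hd'
        exact Prod.ext h ((Finset.mem_filter.1 hd).2.trans (Finset.mem_filter.1 hd').2.symm)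
    have h3 : ∀ w ∈ hSvfin.toFinset, ((G.neighborFinset w).filter (· ∉ Sv)).card ≤
        if 3 ≤ G.degree w then G.degree w else 1 := by
      intro w hw
      by_cases h3w : 3 ≤ G.degree w
      · rw [if_pos h3w]
        exact (Finset.card_filter_le _ _).trans_eq (card_neighborFinset_eq_degree _ _)
      · rw [if_neg h3w]
        have hwS : w ∈ Sv := hSvfin.mem_toFinset.1 hw
        have hdw : G.degree w = 2 := by have := hmin w; omega
        have hwEP : ∃ e ∈ F₀, w ∈ e := by
          rcases hwS with h | h
          · exact absurd hdw h
          · exact h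
        obtain ⟨e, he, hwe⟩ := hwEP
        obtain ⟨w', hew'⟩ := Sym2.mem_iff_exists.1 hwe
        have hadj : G.Adj w w' := by
          have := hFE he
          rw [hew'] at this
          exact this
        have hw'S : w' ∈ Sv := Or.inr ⟨e, he, by rw [hew']; exact Sym2.mem_mk_right _ _⟩
        have hsub : ((G.neighborFinset w).filter (· ∉ Sv)) ⊆
            (G.neighborFinset w).erase w' := by
          intro u hu
          rw [Finset.mem_filter] at hu
          exact Finset.mem_erase.2 ⟨fun h => hu.2 (h ▸ hw'S), hu.1⟩
        calc ((G.neighborFinset w).filter (· ∉ Sv)).card ≤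
            ((G.neighborFinset w).erase w').card := Finset.card_le_card hsub
        _ = G.degree w - 1 := by
            rw [Finset.card_erase_of_mem ((mem_neighborFinset _ _ _).2 hadj),
              card_neighborFinset_eq_degree]
        _ ≤ 1 := by omega
    have h4 : ∑ w ∈ hSvfin.toFinset, (if 3 ≤ G.degree w then G.degree w else 1)
        ≤ t + 2 * p := by
      rw [← Finset.sum_filter_add_sum_filter_not hSvfin.toFinset (fun w => 3 ≤ G.degree w)
        (fun w => if 3 ≤ G.degree w then G.degree w else 1)]
      have hA : ∑ w ∈ hSvfin.toFinset.filter (fun w => 3 ≤ G.degree w),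
          (if 3 ≤ G.degree w then G.degree w else 1) ≤ t := by
        rw [Finset.sum_congr rfl (fun w hw => if_pos (Finset.mem_filter.1 hw).2)]
        apply Finset.sum_le_sum_of_subset
        intro w hw
        rw [Finset.mem_filter] at hw
        rw [hV₃, Finset.mem_filter]
        exact ⟨Finset.mem_univ _, hw.2⟩
      have hB : ∑ w ∈ hSvfin.toFinset.filter (fun w => ¬ 3 ≤ G.degree w),
          (if 3 ≤ G.degree w then G.degree w else 1) ≤ 2 * p := by
        rw [Finset.sum_congr rfl (fun w hw => if_neg (Finset.mem_filter.1 hw).2)]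
        rw [Finset.sum_const, smul_eq_mul, mul_one]
        refine le_trans (Finset.card_le_card ?_) hEPcard
        intro w hw
        rw [Finset.mem_filter, hSvfin.mem_toFinset] at hw
        obtain ⟨hwS, h3w⟩ := hw
        have hdw : G.degree w = 2 := by have := hmin w; omega
        apply hmemEP
        rcases hwS with h | h
        · exact absurd hdw h
        · exact h
      omega
    calc D.card = ∑ w ∈ hSvfin.toFinset, (D.filter (fun d => d.2 = w)).card := h1
    _ ≤ ∑ w ∈ hSvfin.toFinset, (if 3 ≤ G.degree w then G.degree w else 1) :=
        Finset.sum_le_sum (fun w hw => le_trans (h2 w hw) (h3 w hw))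
    _ ≤ t + 2 * p := h4
  -- the components
  have hPim : {P : Set V | ∃ v ∉ Sv, P = {w | (restrictOut G Sv).Reachable v w}}
      = (fun v => {w | (restrictOut G Sv).Reachable v w}) '' {v | v ∉ Sv} := by
    ext P
    constructor
    · rintro ⟨v, hv, rfl⟩; exact ⟨v, hv, rfl⟩
    · rintro ⟨v, hv, rfl⟩; exact ⟨v, hv, rfl⟩
  have hPfin : {P : Set V | ∃ v ∉ Sv, P = {w | (restrictOut G Sv).Reachable v w}}.Finite := by
    rw [hPim]
    exact (Set.toFinite _).image _
  -- properties of each component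
  have hprops : ∀ (v : V), v ∉ Sv →
      (∀ w ∈ {w | (restrictOut G Sv).Reachable v w}, w ∉ Sv) ∧
      (∀ a ∈ {w | (restrictOut G Sv).Reachable v w}, ∀ b, G.Adj a b → b ∉ Sv →
        b ∈ {w | (restrictOut G Sv).Reachable v w}) ∧
      (G.induce {w | (restrictOut G Sv).Reachable v w}).IsTree := by
    intro v hv
    set P := {w | (restrictOut G Sv).Reachable v w} with hP
    have hPS : ∀ w ∈ P, w ∉ Sv := fun w hw => restrictOut_reachable_not_mem hw hv
    have hcl : ∀ a ∈ P, ∀ b, G.Adj a b → b ∉ Sv → b ∈ P := by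
      intro a ha b hadj hb
      exact Reachable.trans ha (SimpleGraph.Adj.reachable ⟨hadj, hPS a ha, hb⟩)
    have hclro : ∀ {a b : V}, a ∈ P → (restrictOut G Sv).Adj a b → b ∈ P := by
      intro a b ha hadj
      exact Reachable.trans ha (SimpleGraph.Adj.reachable hadj)
    have hvP : v ∈ P := Reachable.refl _
    have hconnP : (G.induce P).Connected := by
      rw [connected_iff]
      refine ⟨?_, ⟨⟨v, hvP⟩⟩⟩
      rintro ⟨a, ha⟩ ⟨b, hb⟩
      have hab : (restrictOut G Sv).Reachable a b := (Reachable.symm ha).trans hb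
      obtain ⟨q⟩ := hab
      obtain ⟨hb', hr⟩ := restrictOut_walk_induce_reachable hclro q ha
      exact hr
    have hacP : (G.induce P).IsAcyclic := by
      intro u c hc
      have hhom : ∀ (a b : ↥P), (G.induce P).Adj a b →
          (G.deleteEdges F₀).Adj a.val b.val := by
        intro a b hadj
        rw [deleteEdges_adj]
        refine ⟨hadj, fun hmem => ?_⟩
        exact hPS a.val a.2 (Or.inr ⟨s(a.val, b.val), hmem, Sym2.mem_mk_left _ _⟩)
      let f : G.induce P →g G.deleteEdges F₀ := ⟨Subtype.val, fun {a b} h => hhom a b h⟩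
      exact hFac (c.map f) (hc.map (fun x y h => Subtype.ext h))
    exact ⟨hPS, hcl, ⟨hconnP, hacP⟩⟩
  -- counting the components
  set f : Set V → Finset (V × V) :=
    fun P => D.filter (fun d : V × V => d.1 ∈ P) with hf
  have hPcount : 2 * hPfin.toFinset.card ≤ D.card := by
    have hdisj : ∀ P ∈ hPfin.toFinset, ∀ Q ∈ hPfin.toFinset, P ≠ Q →
        Disjoint (f P) (f Q) := by
      intro P hP Q hQ hne
      rw [Finset.disjoint_left]
      intro d hdP hdQ
      replace hdP := Finset.mem_filter.1 hdP
      replace hdQ := Finset.mem_filter.1 hdQ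
      apply hne
      rw [Set.Finite.mem_toFinset] at hP hQ
      obtain ⟨a, ha, rfl⟩ := hP
      obtain ⟨b, hb, rfl⟩ := hQ
      have h1 : (restrictOut G Sv).Reachable a d.1 := hdP.2
      have h2 : (restrictOut G Sv).Reachable b d.1 := hdQ.2
      ext z
      simp only [Set.mem_setOf_eq]
      constructor
      · intro h; exact (h2.trans h1.symm).trans h
      · intro h; exact (h1.trans h2.symm).trans h
    have hsub : hPfin.toFinset.biUnion f ⊆ D := by
      intro d hd
      rw [Finset.mem_biUnion] at hd
      obtain ⟨P, _, hdP⟩ := hd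
      exact (Finset.mem_filter.1 hdP).1
    have hcardb := Finset.card_biUnion hdisj
    have h2le : ∀ P ∈ hPfin.toFinset, 2 ≤ (f P).card := by
      intro P hP
      rw [Set.Finite.mem_toFinset] at hP
      obtain ⟨v, hv, rfl⟩ := hP
      obtain ⟨hPS, hcl, htreeP⟩ := hprops v hv
      have hdegP : ∀ w ∈ {w | (restrictOut G Sv).Reachable v w}, G.degree w = 2 :=
        fun w hw => hdegS w (hPS w hw)
      have h := two_le_darts hPS hcl hdegP htreeP
      have hset : {d : V × V | (G.Adj d.1 d.2 ∧ d.1 ∉ Sv ∧ d.2 ∈ Sv) ∧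
          d.1 ∈ {w | (restrictOut G Sv).Reachable v w}} =
          ↑(f {w | (restrictOut G Sv).Reachable v w}) := by
        ext d
        simp [hf, hD, Finset.mem_filter, and_assoc]
      rw [hset, Set.ncard_coe_finset] at h
      exact h
    calc 2 * hPfin.toFinset.card = ∑ _P ∈ hPfin.toFinset, 2 := by
          rw [Finset.sum_const, smul_eq_mul, mul_comm]
    _ ≤ ∑ P ∈ hPfin.toFinset, (f P).card :=
        Finset.sum_le_sum h2le
    _ = (hPfin.toFinset.biUnion f).card :=
        (Finset.card_biUnion hdisj).symm
    _ ≤ D.card := Finset.card_le_card hsub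
  have hPncard : {P : Set V | ∃ v ∉ Sv, P = {w | (restrictOut G Sv).Reachable v w}}.ncard
      = hPfin.toFinset.card := Set.ncard_eq_toFinset_card _ hPfin
  -- final assembly
  refine ⟨Sv, by omega, by omega, ?_⟩
  rintro P ⟨v, hv, rfl⟩
  obtain ⟨hPS, hcl, htreeP⟩ := hprops v hv
  refine ⟨htreeP.isConnected, htreeP.IsAcyclic, ?_⟩
  intro w hw
  have hdw : G.degree w = 2 := hdegS w (hPS w hw)
  rw [Set.ncard_eq_toFinset_card']
  rw [show (G.neighborSet w).toFinset = G.neighborFinset w from by ext x; simp]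
  rw [card_neighborFinset_eq_degree]
  exact hdw
end

section
/- Let G be a graph, S a fen-core of G, and S⁺ ⊇ S a minimal set such that each connected component of G contains a vertex of S⁺. Then for each vertex u ∉ S, there are at most two distinct u-S⁺ paths (paths from u to S⁺ whose only vertex in S⁺ is the endpoint). -/
/-- The (open) neighborhood of a set `S`: vertices adjacent to some vertex of `S`. -/
def nbhdSet {V : Type*} (G : SimpleGraph V) (S : Set V) : Set V :=
  {x | ∃ s ∈ S, G.Adj x s}

/-- A `u`-`S` path: a path from `u` ending in `S` that meets `S` only in its
final vertex. -/
def IsUSPath {V : Type*} (G : SimpleGraph V) (S : Set V) (u : V)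
    (q : Σ s : V, G.Walk u s) : Prop :=
  q.1 ∈ S ∧ q.2.IsPath ∧ ∀ x ∈ q.2.support, x ∈ S → x = q.1

/-- An `S`-outer path: a path disjoint from `S` whose intersection with `N(S)`
consists exactly of its two endpoints. -/
def IsOuterPath {V : Type*} (G : SimpleGraph V) (S : Set V) {a b : V}
    (P : G.Walk a b) : Prop :=
  P.IsPath ∧ (∀ x ∈ P.support, x ∉ S) ∧
  {x | x ∈ P.support ∧ x ∈ nbhdSet G S} = {a, b}

/-- `S` is a fen-core of `G` (with feedback edge number `p`): every cycle has an
edge inside `G[S]`, every vertex outside `S` has at most two `u`-`S` paths, every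
`S`-outer path has length at least `7`, and `|S| ≤ 32 p`. -/
def IsFenCore {V : Type*} (G : SimpleGraph V) (S : Set V) (p : ℕ) : Prop :=
  (∀ (v : V) (c : G.Walk v v), c.IsCycle → ∃ e ∈ c.edges, ∀ x ∈ e, x ∈ S) ∧
  (∀ u ∉ S, {q : Σ s : V, G.Walk u s | IsUSPath G S u q}.ncard ≤ 2) ∧
  (∀ (a b : V) (P : G.Walk a b), IsOuterPath G S P → 7 ≤ P.length) ∧
  S.ncard ≤ 32 * p

/-- A walk whose support lies in `C` lifts to the induced subgraph on `C`. -/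
lemma liftWalk {V : Type*} {G : SimpleGraph V} {C : Set V} :
    ∀ {a b : V} (p : G.Walk a b) (h : ∀ x ∈ p.support, x ∈ C),
    ∃ q : (G.induce C).Walk ⟨a, h a p.start_mem_support⟩ ⟨b, h b p.end_mem_support⟩,
      q.map (SimpleGraph.Embedding.induce C).toHom = p := by
  intro a b p
  induction p with
  | nil => intro h; exact ⟨.nil, rfl⟩
  | cons hadj p ih =>
    intro h
    obtain ⟨q, hq⟩ := ih (fun x hx => h x (by simp [hx]))
    refine ⟨SimpleGraph.Walk.cons (by exact hadj) q, ?_⟩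
    exact congrArg (SimpleGraph.Walk.cons hadj) hq

theorem stmt5 {V : Type*} (G : SimpleGraph V) (S : Set V) (p : ℕ)
    (hp : FeedbackEdgeNumber G p) (hS : IsFenCore G S p)
    (Splus : Set V)
    (hmin : Minimal (fun T : Set V => S ⊆ T ∧ ∀ v : V, ∃ w ∈ T, G.Reachable v w) Splus)
    (u : V) (hu : u ∉ S) :
    {q : Σ s : V, G.Walk u s | IsUSPath G Splus u q}.ncard ≤ 2 := by
  classical
  have hkey : ∀ t ∈ Splus, t ∉ S → ∀ w ∈ Splus, G.Reachable t w → w = t := by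
    intro t ht htS
    have hnP : ¬ ((S ⊆ Splus \ {t}) ∧ ∀ v : V, ∃ w ∈ Splus \ {t}, G.Reachable v w) := by
      intro hPT
      have h2 := hmin.2 hPT Set.diff_subset ht
      exact h2.2 rfl
    have hsub : S ⊆ Splus \ {t} := fun s hs =>
      ⟨hmin.prop.1 hs, fun he => htS (Set.mem_singleton_iff.mp he ▸ hs)⟩
    push_neg at hnP
    obtain ⟨v, hv⟩ := hnP hsub
    obtain ⟨w0, hw0, hr0⟩ := hmin.prop.2 v
    have hw0t : w0 = t := by
      by_contra hne; exact hv w0 ⟨hw0, hne⟩ hr0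
    subst hw0t
    intro w hw hrw
    by_contra hne
    exact hv w ⟨hw, hne⟩ (hr0.trans hrw)
  by_cases hcase : ∃ s ∈ S, G.Reachable u s
  · obtain ⟨s0, hs0S, hs0r⟩ := hcase
    have hset : {q : Σ s : V, G.Walk u s | IsUSPath G Splus u q}
        = {q | IsUSPath G S u q} := by
      ext q
      constructor
      · rintro ⟨hq1, hq2, hq3⟩
        have hq1S : q.1 ∈ S := by
          by_contra hnot
          have := hkey q.1 hq1 hnot s0 (hmin.prop.1 hs0S)
            (q.2.reachable.symm.trans hs0r)
          exact hnot (this ▸ hs0S)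
        exact ⟨hq1S, hq2, fun x hx hxS => hq3 x hx (hmin.prop.1 hxS)⟩
      · rintro ⟨hq1, hq2, hq3⟩
        refine ⟨hmin.prop.1 hq1, hq2, fun x hx hxP => ?_⟩
        by_cases hxS : x ∈ S
        · exact hq3 x hx hxS
        · exfalso
          have hrux : G.Reachable u x := ⟨q.2.takeUntil x hx⟩
          have := hkey x hxP hxS s0 (hmin.prop.1 hs0S) (hrux.symm.trans hs0r)
          exact hxS (this ▸ hs0S)
    rw [hset]
    exact hS.2.1 u hu
  · set C : Set V := {v | G.Reachable u v} with hC
    have hac : (G.induce C).IsAcyclic := by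
      intro v c hc
      have hc' := hc.map (f := (SimpleGraph.Embedding.induce C).toHom)
        (SimpleGraph.Embedding.induce (G := G) C).injective
      obtain ⟨e, he, heS⟩ := hS.1 _ _ hc'
      obtain ⟨a, b, hab⟩ : ∃ a b, e = s(a, b) := by
        induction e using Sym2.ind with
        | _ x y => exact ⟨x, y, rfl⟩
      subst hab
      have haS : a ∈ S := heS a (Sym2.mem_mk_left a b)
      have hasup := SimpleGraph.Walk.fst_mem_support_of_mem_edges _ he
      rw [SimpleGraph.Walk.support_map] at hasup
      obtain ⟨y, hy, hya⟩ := List.mem_map.mp hasup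
      refine hcase ⟨a, haS, ?_⟩
      rw [← hya]
      exact y.2
    have hsub : {q : Σ s : V, G.Walk u s | IsUSPath G Splus u q}.Subsingleton := by
      rintro ⟨s1, p1⟩ ⟨hq1, hp1, hm1⟩ ⟨s2, p2⟩ ⟨hq2, hp2, hm2⟩
      have hs1S : s1 ∉ S := fun h => hcase ⟨s1, h, p1.reachable⟩
      have hs12 : s2 = s1 := hkey s1 hq1 hs1S s2 hq2 (p1.reachable.symm.trans p2.reachable)
      subst hs12
      have hsup1 : ∀ x ∈ p1.support, x ∈ C := fun x hx => ⟨p1.takeUntil x hx⟩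
      have hsup2 : ∀ x ∈ p2.support, x ∈ C := fun x hx => ⟨p2.takeUntil x hx⟩
      obtain ⟨q1, hq1'⟩ := liftWalk p1 hsup1
      obtain ⟨q2, hq2'⟩ := liftWalk p2 hsup2
      have hpq1 : q1.IsPath := by
        apply SimpleGraph.Walk.IsPath.of_map (f := (SimpleGraph.Embedding.induce C).toHom)
        rw [hq1']; exact hp1
      have hpq2 : q2.IsPath := by
        apply SimpleGraph.Walk.IsPath.of_map (f := (SimpleGraph.Embedding.induce C).toHom)
        rw [hq2']; exact hp2
      have hq12 : (⟨q1, hpq1⟩ : (G.induce C).Path _ _) = ⟨q2, hpq2⟩ :=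
        hac.path_unique _ _
      have hq12' : q1 = q2 := congrArg Subtype.val hq12
      have hp12 : p1 = p2 := by rw [← hq1', ← hq2', hq12']
      simp [hp12]
    rcases Set.eq_empty_or_nonempty {q : Σ s : V, G.Walk u s | IsUSPath G Splus u q}
      with he | ⟨q0, hq0⟩
    · simp [he]
    · rw [hsub.eq_singleton_of_mem hq0]
      simp
end

section
/- Let G be a graph, k an integer, U ⊆ V(G), χ a proper coloring of G[U], and suppose ψ is a k-b-coloring of G extending the following setup: χ = ψ restricted to S, all vertices of B are b-vertices in ψ, and no color in [b+1, p] has a b-vertex in S, where (χ, B) is an S-profile. Then every color c ∈ [k] has a b-vertex in K⁺ = K ∪ B, where K = {u ∉ S : red_χ(u) ≥ 0}. Moreover, if |K⁺| = k, then all vertices in K⁺ are b-vertices in ψ. -/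
/-- `v` is a `χ`-candidate: its `χ`-redundancy `|N[v] \ S| + |χ(N[v])| − k`
is nonnegative, where `χ` is a partial coloring defined on `S`. -/
def IsCandidate {V : Type*} (G : SimpleGraph V) (S : Set V) (χ : V → ℕ)
    (k : ℕ) (v : V) : Prop :=
  k ≤ (closedNbhd G v \ S).ncard + (χ '' (closedNbhd G v ∩ S)).ncard

/-- `v` is `χ`-tight: its `χ`-redundancy is exactly `0`. -/
def IsTight {V : Type*} (G : SimpleGraph V) (S : Set V) (χ : V → ℕ)
    (k : ℕ) (v : V) : Prop :=
  (closedNbhd G v \ S).ncard + (χ '' (closedNbhd G v ∩ S)).ncard = k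

/-- `(χ, B)` is an `S`-profile: `χ` is a proper coloring of `G[S]` with colors in
`[p]`, and `B ⊆ S` is a set of `χ`-candidates with `χ(B) = [b]` and `|B| = b`. -/
def IsSProfile {V : Type*} (G : SimpleGraph V) (S : Set V) (χ : V → ℕ)
    (B : Set V) (k p b : ℕ) : Prop :=
  (∀ u ∈ S, ∀ v ∈ S, G.Adj u v → χ u ≠ χ v) ∧
  (∀ u ∈ S, χ u ∈ Finset.Icc 1 p) ∧
  B ⊆ S ∧ (∀ u ∈ B, IsCandidate G S χ k u) ∧
  χ '' B = ↑(Finset.Icc 1 b) ∧ B.ncard = b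

/-- `K⁺ = K ∪ B` where `K` is the set of `χ`-candidates outside `S`. -/
def Kplus {V : Type*} (G : SimpleGraph V) (S : Set V) (χ : V → ℕ)
    (B : Set V) (k : ℕ) : Set V :=
  {u | u ∉ S ∧ IsCandidate G S χ k u} ∪ B

/-- The `k`-b-coloring `ψ` is described by the `S`-profile `(χ, B)`:
`ψ` restricted to `S` is `χ`, all vertices of `B` are b-vertices, and no color in
`[b+1, p]` has a b-vertex in `S`. -/
def DescribedBy {V : Type*} (G : SimpleGraph V) (S : Set V) (χ : V → ℕ)
    (B : Set V) (k p b : ℕ) (ψ : V → ℕ) : Prop :=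
  IsBColoring G k ψ ∧ (∀ u ∈ S, ψ u = χ u) ∧
  (∀ u ∈ B, IsBVertex G k ψ u) ∧
  ∀ c ∈ Finset.Icc (b + 1) p, ¬∃ u ∈ S, ψ u = c ∧ IsBVertex G k ψ u

theorem stmt11 {V : Type*} [Fintype V] (G : SimpleGraph V) (S : Set V)
    (χ : V → ℕ) (B : Set V) (k p b : ℕ)
    (hprof : IsSProfile G S χ B k p b)
    (ψ : V → ℕ) (hψ : DescribedBy G S χ B k p b ψ) :
    (∀ c ∈ Finset.Icc 1 k, ∃ u ∈ Kplus G S χ B k, ψ u = c ∧ IsBVertex G k ψ u) ∧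
    ((Kplus G S χ B k).ncard = k → ∀ u ∈ Kplus G S χ B k, IsBVertex G k ψ u) := by
  obtain ⟨hbcol, hψS, hBbv, hnob⟩ := hψ
  obtain ⟨hχprop, hχrange, hBS, hBcand, hχB, hBcard⟩ := hprof
  have part1 : ∀ c ∈ Finset.Icc 1 k,
      ∃ u ∈ Kplus G S χ B k, ψ u = c ∧ IsBVertex G k ψ u := by
    intro c hc
    rw [Finset.mem_Icc] at hc
    by_cases hcb : c ≤ b
    · -- color c ≤ b : use the B-vertex of color c
      have : c ∈ (↑(Finset.Icc 1 b) : Set ℕ) := by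
        simp [Finset.mem_Icc]; exact ⟨hc.1, hcb⟩
      rw [← hχB] at this
      obtain ⟨u, huB, huc⟩ := this
      refine ⟨u, Or.inr huB, ?_, hBbv u huB⟩
      rw [hψS u (hBS huB), huc]
    · -- color c ≥ b+1 : its b-vertex is outside S, hence a candidate
      push_neg at hcb
      obtain ⟨u, huc, hubv⟩ := hbcol.2.2 c (Finset.mem_Icc.mpr hc)
      have huS : u ∉ S := by
        intro huS
        have hcp : c ≤ p := by
          have := hχrange u huS
          rw [Finset.mem_Icc] at this
          rw [← hψS u huS, huc] at this
          exact this.2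
        exact hnob c (Finset.mem_Icc.mpr ⟨hcb, hcp⟩) ⟨u, huS, huc, hubv⟩
      have hcand : IsCandidate G S χ k u := by
        have hsub : (↑(Finset.Icc 1 k) : Set ℕ) ⊆ ψ '' closedNbhd G u := by
          intro d hd
          simp only [Finset.coe_Icc, Set.mem_Icc] at hd
          obtain ⟨w, hw, hwc⟩ := hubv d (Finset.mem_Icc.mpr hd)
          exact ⟨w, hw, hwc⟩
        have himg : ψ '' (closedNbhd G u ∩ S) = χ '' (closedNbhd G u ∩ S) :=
          Set.image_congr fun a ha => hψS a ha.2
        calc k = (↑(Finset.Icc 1 k) : Set ℕ).ncard := by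
                rw [Set.ncard_coe_finset]; simp
          _ ≤ (ψ '' closedNbhd G u).ncard :=
                Set.ncard_le_ncard hsub (Set.toFinite _)
          _ = (ψ '' ((closedNbhd G u \ S) ∪ (closedNbhd G u ∩ S))).ncard := by
                rw [Set.diff_union_inter]
          _ = (ψ '' (closedNbhd G u \ S) ∪ ψ '' (closedNbhd G u ∩ S)).ncard := by
                rw [Set.image_union]
          _ ≤ (ψ '' (closedNbhd G u \ S)).ncard + (ψ '' (closedNbhd G u ∩ S)).ncard :=
                Set.ncard_union_le _ _
          _ ≤ (closedNbhd G u \ S).ncard + (χ '' (closedNbhd G u ∩ S)).ncard := by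
                rw [himg]
                exact add_le_add (Set.ncard_image_le (Set.toFinite _)) le_rfl
      exact ⟨u, Or.inl ⟨huS, hcand⟩, huc, hubv⟩
  refine ⟨part1, ?_⟩
  intro hcard u hu
  set W : Set V := {v | v ∈ Kplus G S χ B k ∧ IsBVertex G k ψ v} with hW
  have hWsub : W ⊆ Kplus G S χ B k := fun v hv => hv.1
  have hksub : (↑(Finset.Icc 1 k) : Set ℕ) ⊆ ψ '' W := by
    intro c hc
    simp only [Finset.coe_Icc, Set.mem_Icc] at hc
    obtain ⟨v, hvK, hvc, hvbv⟩ := part1 c (Finset.mem_Icc.mpr hc)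
    exact ⟨v, ⟨hvK, hvbv⟩, hvc⟩
  have hkle : k ≤ W.ncard := by
    calc k = (↑(Finset.Icc 1 k) : Set ℕ).ncard := by
            rw [Set.ncard_coe_finset]; simp
      _ ≤ (ψ '' W).ncard := Set.ncard_le_ncard hksub (Set.toFinite _)
      _ ≤ W.ncard := Set.ncard_image_le (Set.toFinite _)
  have heq : W = Kplus G S χ B k :=
    Set.eq_of_subset_of_ncard_le hWsub (hcard.le.trans hkle) (Set.toFinite _)
  rw [← heq] at hu
  exact hu.2
end

section
/- Let G be a graph, (χ, B) an S-profile, K⁺ = {u ∉ S : red_χ(u) ≥ 0} ∪ B, and ψ a k-b-coloring of G described by (χ, B). Suppose u ∈ V(G), v ∉ S, and w ∈ K⁺ is χ-tight, adjacent to both u and v with u ≠ v, and w is a b-vertex in ψ. Then ψ(u) ≠ ψ(v). -/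
theorem stmt12 {V : Type*} [Fintype V] (G : SimpleGraph V) (S : Set V)
    (χ : V → ℕ) (B : Set V) (k p b : ℕ)
    (hprof : IsSProfile G S χ B k p b)
    (ψ : V → ℕ) (hψ : DescribedBy G S χ B k p b ψ)
    (u v w : V) (hv : v ∉ S) (hw : w ∈ Kplus G S χ B k)
    (htight : IsTight G S χ k w)
    (hwu : G.Adj w u) (hwv : G.Adj w v) (huv : u ≠ v)
    (hb : IsBVertex G k ψ w) :
    ψ u ≠ ψ v := by
  intro h
  obtain ⟨hψS⟩ : (∀ u ∈ S, ψ u = χ u) ∧ True := ⟨hψ.2.1, trivial⟩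
  set N := closedNbhd G w with hN
  have huN : u ∈ N := Set.mem_insert_of_mem _ hwu
  have hvN : v ∈ N := Set.mem_insert_of_mem _ hwv
  have hvNS : v ∈ N \ S := ⟨hvN, hv⟩
  set A : Set V := (N \ S) \ {v} with hA
  set C : Set V := N ∩ S with hC
  have hfin : N.Finite := Set.toFinite _
  -- ψ '' N ⊆ ψ '' (A ∪ C)
  have hsub : ψ '' N ⊆ ψ '' (A ∪ C) := by
    rintro c ⟨x, hx, rfl⟩
    by_cases hxv : x = v
    · subst hxv
      rw [← h]
      by_cases huS : u ∈ S
      · exact ⟨u, Or.inr ⟨huN, huS⟩, rfl⟩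
      · exact ⟨u, Or.inl ⟨⟨huN, huS⟩, huv⟩, rfl⟩
    · by_cases hxS : x ∈ S
      · exact ⟨x, Or.inr ⟨hx, hxS⟩, rfl⟩
      · exact ⟨x, Or.inl ⟨⟨hx, hxS⟩, hxv⟩, rfl⟩
  have hψC : ψ '' C = χ '' C := Set.image_congr (fun x hx => hψS x hx.2)
  have h1 : (ψ '' N).ncard ≤ A.ncard + (χ '' C).ncard := by
    calc (ψ '' N).ncard ≤ (ψ '' (A ∪ C)).ncard :=
          Set.ncard_le_ncard hsub (Set.toFinite _)
      _ = (ψ '' A ∪ ψ '' C).ncard := by rw [Set.image_union]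
      _ ≤ (ψ '' A).ncard + (ψ '' C).ncard := Set.ncard_union_le _ _
      _ ≤ A.ncard + (χ '' C).ncard := by
          rw [hψC]
          exact Nat.add_le_add_right (Set.ncard_image_le (Set.toFinite _)) _
  have hAcard : A.ncard = (N \ S).ncard - 1 :=
    Set.ncard_diff_singleton_of_mem hvNS
  have hm1 : 0 < (N \ S).ncard := (Set.ncard_pos (Set.toFinite _)).2 ⟨v, hvNS⟩
  -- k ≤ (ψ '' N).ncard
  have h2 : k ≤ (ψ '' N).ncard := by
    have hsub2 : (↑(Finset.Icc 1 k) : Set ℕ) ⊆ ψ '' N := by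
      intro c hc
      obtain ⟨x, hx, hxc⟩ := hb c hc
      exact ⟨x, hx, hxc⟩
    have := Set.ncard_le_ncard hsub2 (Set.toFinite _)
    rwa [Set.ncard_coe_finset, Nat.card_Icc, Nat.add_sub_cancel] at this
  have htight' : (N \ S).ncard + (χ '' C).ncard = k := htight
  omega
end

section
/- Let G be a graph with co-cluster-modulator S, p = min(|S|, k), 𝒰 the set of maximal independent sets of G − S, and ψ a k-b-coloring of G with ψ(S) ⊆ [p]. Then for each color c ∈ [p+1, k], there is a unique set U_c ∈ 𝒰 with ψ⁻¹(c) ⊆ U_c, and for distinct colors c, d ∈ [p+1, k] we have U_c ≠ U_d. -/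
/-- `S` is a co-cluster-modulator of `G`: `G − S` is a complete multipartite
(co-cluster) graph, i.e., non-adjacency is transitive on the vertices outside `S`. -/
def IsCoClusterModulator {V : Type*} (G : SimpleGraph V) (S : Set V) : Prop :=
  ∀ u ∉ S, ∀ v ∉ S, ∀ w ∉ S, ¬G.Adj u v → ¬G.Adj v w → ¬G.Adj u w

/-- `U` is a maximal independent set of `G − S`. -/
def IsMaxIndepOn {V : Type*} (G : SimpleGraph V) (S U : Set V) : Prop :=
  U ⊆ Sᶜ ∧ (∀ u ∈ U, ∀ v ∈ U, ¬G.Adj u v) ∧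
  ∀ W : Set V, U ⊆ W → W ⊆ Sᶜ → (∀ u ∈ W, ∀ v ∈ W, ¬G.Adj u v) → W = U

theorem stmt15 {V : Type*} [Fintype V] (G : SimpleGraph V) (S : Set V) (k p : ℕ)
    (hS : IsCoClusterModulator G S)
    (hp : p = min S.ncard k)
    (ψ : V → ℕ) (hψ : IsBColoring G k ψ)
    (hψS : ∀ v ∈ S, ψ v ∈ Finset.Icc 1 p) :
    (∀ c ∈ Finset.Icc (p + 1) k,
      ∃! U : Set V, IsMaxIndepOn G S U ∧ {v | ψ v = c} ⊆ U) ∧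
    ∀ c ∈ Finset.Icc (p + 1) k, ∀ d ∈ Finset.Icc (p + 1) k, c ≠ d →
      ∀ U U' : Set V,
        (IsMaxIndepOn G S U ∧ {v | ψ v = c} ⊆ U) →
        (IsMaxIndepOn G S U' ∧ {v | ψ v = d} ⊆ U') → U ≠ U' := by
  obtain ⟨hψk, hψprop, hψb⟩ := hψ
  constructor
  · intro c hc
    rw [Finset.mem_Icc] at hc
    obtain ⟨u, huc, -⟩ := hψb c (Finset.mem_Icc.mpr ⟨by omega, hc.2⟩)
    have huS : u ∉ S := by
      intro h
      have := Finset.mem_Icc.mp (hψS u h)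
      omega
    set Uc : Set V := {v | v ∉ S ∧ ¬G.Adj u v} with hUcdef
    have huU : u ∈ Uc := ⟨huS, G.loopless.irrefl u⟩
    have hind : ∀ a ∈ Uc, ∀ b ∈ Uc, ¬G.Adj a b := by
      intro a ha b hb
      exact hS a ha.1 u huS b hb.1 (fun h => ha.2 h.symm) hb.2
    have hmax : IsMaxIndepOn G S Uc := by
      refine ⟨fun v hv => hv.1, hind, ?_⟩
      intro W hUW hWS hWind
      apply Set.Subset.antisymm _ hUW
      intro w hw
      exact ⟨hWS hw, hWind u (hUW huU) w hw⟩
    have hsub : {v | ψ v = c} ⊆ Uc := by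
      intro v hv
      have hv' : ψ v = c := hv
      have hvS : v ∉ S := by
        intro h
        have := Finset.mem_Icc.mp (hψS v h)
        omega
      exact ⟨hvS, fun hadj => hψprop u v hadj (by rw [huc, hv'])⟩
    refine ⟨Uc, ⟨hmax, hsub⟩, ?_⟩
    rintro U' ⟨⟨hU'S, hU'ind, hU'max⟩, hU'c⟩
    have huU' : u ∈ U' := hU'c huc
    have hsub' : U' ⊆ Uc := fun w hw => ⟨hU'S hw, hU'ind u huU' w hw⟩
    exact (hU'max Uc hsub' (fun v hv => hv.1) hind).symm
  · rintro c hc d hd hcd U U' ⟨hU, hUc⟩ ⟨hU', hU'd⟩ hUU'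
    rw [Finset.mem_Icc] at hc hd
    obtain ⟨u, huc, hub⟩ := hψb c (Finset.mem_Icc.mpr ⟨by omega, hc.2⟩)
    obtain ⟨w, hw, hwd⟩ := hub d (Finset.mem_Icc.mpr ⟨by omega, hd.2⟩)
    have huU : u ∈ U := hUc huc
    have hwU : w ∈ U := by
      rw [hUU']
      exact hU'd hwd
    rcases hw with rfl | hw
    · exact hcd (huc ▸ hwd ▸ rfl)
    · exact hU.2.1 u huU w hwU hw
end
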